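/- arXiv:2001.09302 — 2 statements merged into one kernel-verified Lean document; each statement's English description precedes it below -/
import Mathlib

section
/- Let $(X_1, X_2)$ be a centered bivariate Gaussian vector with unit variances and correlation $\rho \in (-1,1)$, with joint density $\varphi_\rho$. Let $c_1, c_2$ be real constants and $a \in (\rho, 1]$, and set $\lambda_1 = (1-a\rho)/(1-\rho^2)$, $\lambda_2 = (a-\rho)/(1-\rho^2)$. Then as $u \to \infty$, $\mathbb{P}(X_1 > u + c_1, X_2 > au + c_2) \sim \frac{1}{\lambda_1 \lambda_2 u^2} \varphi_\rho(u + c_1, au + c_2)$. -/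
open MeasureTheory ProbabilityTheory Filter Set
open scoped ENNReal NNReal

noncomputable section

/-- A (two-sided) standard Brownian motion: `W 0 = 0`, continuous paths,
centered Gaussian increments with variance `t - s`, and independent increments. -/
def IsStandardBM {Ω : Type*} [MeasurableSpace Ω] (P : Measure Ω) (W : ℝ → Ω → ℝ) : Prop :=
  (∀ t, Measurable (W t)) ∧
  (∀ ω, W 0 ω = 0) ∧
  (∀ ω, Continuous fun t => W t ω) ∧
  (∀ s t : ℝ, s ≤ t →
    P.map (fun ω => W t ω - W s ω) = gaussianReal 0 (t - s).toNNReal) ∧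
  (∀ n : ℕ, ∀ t : ℕ → ℝ, Monotone t →
    iIndepFun
      (fun i : Fin n => fun ω => W (t (i + 1)) ω - W (t i) ω) P)

/-- Density of a centered bivariate Gaussian vector with unit variances and
correlation `ρ`. -/
def phiRho (ρ x y : ℝ) : ℝ :=
  (1 / (2 * Real.pi * Real.sqrt (1 - ρ ^ 2))) *
    Real.exp (-(x ^ 2 - 2 * ρ * x * y + y ^ 2) / (2 * (1 - ρ ^ 2)))


section GaussianTailAux

open Real

lemma phiRho_pos {ρ : ℝ} (hσ : 0 < 1 - ρ ^ 2) (x y : ℝ) : 0 < phiRho ρ x y := by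
  unfold phiRho
  have h1 : 0 < Real.sqrt (1 - ρ ^ 2) := Real.sqrt_pos.mpr hσ
  have h2 : 0 < Real.pi := Real.pi_pos
  positivity

lemma phiRho_shift {ρ : ℝ} (hσ : 0 < 1 - ρ ^ 2) (p q s t : ℝ) :
    phiRho ρ (p + s) (q + t) =
      phiRho ρ p q *
        (Real.exp (-((p - ρ * q) / (1 - ρ ^ 2) * s)) *
          Real.exp (-((q - ρ * p) / (1 - ρ ^ 2) * t))) *
        Real.exp (-((s ^ 2 - 2 * ρ * s * t + t ^ 2) / (2 * (1 - ρ ^ 2)))) := by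
  unfold phiRho
  simp only [mul_assoc, ← Real.exp_add]
  congr 1
  rw [Real.exp_eq_exp]
  field_simp
  ring

lemma phiRho_upper {ρ : ℝ} (hσ : 0 < 1 - ρ ^ 2) (p q s t : ℝ) :
    phiRho ρ (p + s) (q + t) ≤
      phiRho ρ p q *
        (Real.exp (-((p - ρ * q) / (1 - ρ ^ 2) * s)) *
          Real.exp (-((q - ρ * p) / (1 - ρ ^ 2) * t))) := by
  rw [phiRho_shift hσ]
  have hq2 : 0 ≤ (s ^ 2 - 2 * ρ * s * t + t ^ 2) / (2 * (1 - ρ ^ 2)) := by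
    apply div_nonneg _ (by linarith)
    nlinarith [sq_nonneg (s - ρ * t), mul_nonneg hσ.le (sq_nonneg t)]
  have hexp : Real.exp (-((s ^ 2 - 2 * ρ * s * t + t ^ 2) / (2 * (1 - ρ ^ 2)))) ≤ 1 :=
    Real.exp_le_one_iff.mpr (by linarith)
  have hpos : 0 ≤ phiRho ρ p q *
      (Real.exp (-((p - ρ * q) / (1 - ρ ^ 2) * s)) *
        Real.exp (-((q - ρ * p) / (1 - ρ ^ 2) * t))) := by
    have := (phiRho_pos hσ p q).le
    positivity
  exact mul_le_of_le_one_right hpos hexp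

lemma phiRho_lower {ρ : ℝ} (hσ : 0 < 1 - ρ ^ 2) (p q : ℝ) {s t : ℝ}
    (hs : 0 ≤ s) (ht : 0 ≤ t) :
    phiRho ρ p q *
        ((Real.exp (-((p - ρ * q) / (1 - ρ ^ 2) * s)) *
          Real.exp (-((q - ρ * p) / (1 - ρ ^ 2) * t))) *
          (1 - 1 / (2 * (1 - ρ ^ 2)) * (s + t) ^ 2)) ≤
      phiRho ρ (p + s) (q + t) := by
  rw [phiRho_shift hσ]
  have h1 : 1 - 1 / (2 * (1 - ρ ^ 2)) * (s + t) ^ 2 ≤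
      Real.exp (-((s ^ 2 - 2 * ρ * s * t + t ^ 2) / (2 * (1 - ρ ^ 2)))) := by
    have h2 : (s ^ 2 - 2 * ρ * s * t + t ^ 2) / (2 * (1 - ρ ^ 2)) ≤
        1 / (2 * (1 - ρ ^ 2)) * (s + t) ^ 2 := by
      rw [div_le_iff₀ (by linarith)]
      have heq : 1 / (2 * (1 - ρ ^ 2)) * (s + t) ^ 2 * (2 * (1 - ρ ^ 2)) = (s + t) ^ 2 := by
        field_simp
      rw [heq]
      have hρ1 : -1 < ρ := by nlinarith [sq_nonneg (ρ + 1)]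
      nlinarith [mul_nonneg (mul_nonneg hs ht) (by linarith : (0:ℝ) ≤ 1 + ρ)]
    have h3 := Real.add_one_le_exp (-((s ^ 2 - 2 * ρ * s * t + t ^ 2) / (2 * (1 - ρ ^ 2))))
    linarith
  have hpos : 0 ≤ phiRho ρ p q *
      (Real.exp (-((p - ρ * q) / (1 - ρ ^ 2) * s)) *
        Real.exp (-((q - ρ * p) / (1 - ρ ^ 2) * t))) := by
    have := (phiRho_pos hσ p q).le
    positivity
  calc phiRho ρ p q *
        ((Real.exp (-((p - ρ * q) / (1 - ρ ^ 2) * s)) *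
          Real.exp (-((q - ρ * p) / (1 - ρ ^ 2) * t))) *
          (1 - 1 / (2 * (1 - ρ ^ 2)) * (s + t) ^ 2))
      = phiRho ρ p q *
        (Real.exp (-((p - ρ * q) / (1 - ρ ^ 2) * s)) *
          Real.exp (-((q - ρ * p) / (1 - ρ ^ 2) * t))) *
          (1 - 1 / (2 * (1 - ρ ^ 2)) * (s + t) ^ 2) := by ring
    _ ≤ _ := mul_le_mul_of_nonneg_left h1 hpos



lemma integrableOn_pow_exp {r : ℝ} (hr : 0 < r) (n : ℕ) :
    IntegrableOn (fun t : ℝ => t ^ n * Real.exp (-(r * t))) (Ioi 0) := by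
  apply integrable_of_isBigO_exp_neg (half_pos hr)
  · exact ((continuous_pow n).mul (by continuity)).continuousOn
  · have h := tendsto_rpow_mul_exp_neg_mul_atTop_nhds_zero (n : ℝ) (r / 2) (half_pos hr)
    have h2 : Tendsto (fun x : ℝ => x ^ n * Real.exp (-(r / 2) * x)) atTop (nhds 0) := by
      simpa [Real.rpow_natCast] using h
    have heq : ∀ x : ℝ, x ^ n * Real.exp (-(r * x)) / Real.exp (-(r / 2) * x)
        = x ^ n * Real.exp (-(r / 2) * x) := by
      intro x
      rw [mul_div_assoc, ← Real.exp_sub]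
      congr 1
      ring
    have h3 : Tendsto (fun x : ℝ => x ^ n * Real.exp (-(r * x)) / Real.exp (-(r / 2) * x))
        atTop (nhds 0) := (tendsto_congr heq).mpr h2
    exact (Asymptotics.isLittleO_iff_tendsto'
      (Eventually.of_forall fun x hx => absurd hx (Real.exp_ne_zero _))).mpr h3 |>.isBigO

lemma integral_pow_exp {r : ℝ} (hr : 0 < r) (n : ℕ) :
    ∫ t in Ioi (0:ℝ), t ^ n * Real.exp (-(r * t)) = n.factorial / r ^ (n + 1) := by
  have h := integral_rpow_mul_exp_neg_mul_Ioi (a := (n : ℝ) + 1) (by positivity) hr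
  rw [show ((n : ℝ) + 1) - 1 = (n : ℝ) by ring] at h
  simp only [Real.rpow_natCast] at h
  rw [show ((n : ℝ) + 1) = ((n + 1 : ℕ) : ℝ) by push_cast; ring] at h
  rw [Real.rpow_natCast] at h
  rw [Nat.cast_add, Nat.cast_one, Real.Gamma_nat_eq_factorial] at h
  rw [h]
  rw [one_div, inv_pow]
  field_simp

lemma integrableOn_prod_pow_exp {α β : ℝ} (hα : 0 < α) (hβ : 0 < β) (n m : ℕ) :
    IntegrableOn (fun z : ℝ × ℝ =>
      (z.1 ^ n * Real.exp (-(α * z.1))) * (z.2 ^ m * Real.exp (-(β * z.2))))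
      (Ioi 0 ×ˢ Ioi 0) := by
  rw [IntegrableOn, Measure.volume_eq_prod, ← Measure.prod_restrict]
  exact (integrableOn_pow_exp hα n).mul_prod (integrableOn_pow_exp hβ m)

lemma integral_prod_pow_exp {α β : ℝ} (hα : 0 < α) (hβ : 0 < β) (n m : ℕ) :
    ∫ z in Ioi (0:ℝ) ×ˢ Ioi (0:ℝ),
      (z.1 ^ n * Real.exp (-(α * z.1))) * (z.2 ^ m * Real.exp (-(β * z.2)))
      = (n.factorial / α ^ (n + 1)) * (m.factorial / β ^ (m + 1)) := by
  rw [Measure.volume_eq_prod, ← Measure.prod_restrict,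
    integral_prod_mul (f := fun t : ℝ => t ^ n * Real.exp (-(α * t)))
      (g := fun t : ℝ => t ^ m * Real.exp (-(β * t))),
    integral_pow_exp hα n, integral_pow_exp hβ m]

lemma ofReal_integral_le_lintegral_ofReal' {X : Type*} [MeasurableSpace X] {μ : Measure X}
    {f : X → ℝ} (hfi : Integrable f μ) :
    ENNReal.ofReal (∫ x, f x ∂μ) ≤ ∫⁻ x, ENNReal.ofReal (f x) ∂μ := by
  calc ENNReal.ofReal (∫ x, f x ∂μ)
      ≤ ENNReal.ofReal (∫ x, max (f x) 0 ∂μ) :=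
        ENNReal.ofReal_le_ofReal (integral_mono hfi hfi.pos_part fun x => le_max_left _ _)
    _ = ∫⁻ x, ENNReal.ofReal (max (f x) 0) ∂μ :=
        ofReal_integral_eq_lintegral_ofReal hfi.pos_part
          (ae_of_all _ fun x => le_max_right _ _)
    _ = ∫⁻ x, ENNReal.ofReal (f x) ∂μ := by
        refine lintegral_congr fun x => ?_
        rcases le_or_gt 0 (f x) with h | h
        · rw [max_eq_left h]
        · rw [max_eq_right h.le, ENNReal.ofReal_zero,
            Eq.comm, ENNReal.ofReal_eq_zero]
          exact h.le



lemma key_bound {ρ : ℝ} (hσ : 0 < 1 - ρ ^ 2) (p q α β : ℝ)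
    (hα : α = (p - ρ * q) / (1 - ρ ^ 2)) (hβ : β = (q - ρ * p) / (1 - ρ ^ 2))
    (hαpos : 0 < α) (hβpos : 0 < β)
    {ν : ℝ≥0∞}
    (hν : ν = ∫⁻ z in Ioi (0:ℝ) ×ˢ Ioi (0:ℝ),
      ENNReal.ofReal (phiRho ρ (p + z.1) (q + z.2))) (hfin : ν ≠ ⊤) :
    (phiRho ρ p q * (1 / α * (1 / β))
      - phiRho ρ p q * (1 / (2 * (1 - ρ ^ 2))) * (2 / α ^ 3 * (1 / β))
      - phiRho ρ p q * (2 * (1 / (2 * (1 - ρ ^ 2)))) * (1 / α ^ 2 * (1 / β ^ 2))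
      - phiRho ρ p q * (1 / (2 * (1 - ρ ^ 2))) * (1 / α * (2 / β ^ 3)) ≤ ν.toReal)
    ∧ ν.toReal ≤ phiRho ρ p q * (1 / α * (1 / β)) := by
  set φ := phiRho ρ p q with hφdef
  have hφ : 0 < φ := phiRho_pos hσ p q
  set K : ℝ := 1 / (2 * (1 - ρ ^ 2)) with hKdef
  set Q0 : Set (ℝ × ℝ) := Ioi (0:ℝ) ×ˢ Ioi (0:ℝ) with hQ0
  have hQ0m : MeasurableSet Q0 := measurableSet_Ioi.prod measurableSet_Ioi
  -- basis integrands
  set b : ℕ → ℕ → (ℝ × ℝ → ℝ) := fun n m z =>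
    (z.1 ^ n * Real.exp (-(α * z.1))) * (z.2 ^ m * Real.exp (-(β * z.2))) with hbdef
  have hbint : ∀ n m : ℕ, IntegrableOn (b n m) Q0 :=
    fun n m => integrableOn_prod_pow_exp hαpos hβpos n m
  have hbval : ∀ n m : ℕ, ∫ z in Q0, b n m z
      = ((n.factorial : ℝ) / α ^ (n + 1)) * ((m.factorial : ℝ) / β ^ (m + 1)) :=
    fun n m => integral_prod_pow_exp hαpos hβpos n m
  -- upper bound
  have hub : ν ≤ ENNReal.ofReal (φ * (1 / α * (1 / β))) := by
    rw [hν]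
    have step1 : (∫⁻ z in Q0, ENNReal.ofReal (phiRho ρ (p + z.1) (q + z.2)))
        ≤ ∫⁻ z in Q0, ENNReal.ofReal (φ * b 0 0 z) := by
      refine lintegral_mono fun z => ENNReal.ofReal_le_ofReal ?_
      have h := phiRho_upper hσ p q z.1 z.2
      rw [← hα, ← hβ] at h
      calc phiRho ρ (p + z.1) (q + z.2)
          ≤ φ * (Real.exp (-(α * z.1)) * Real.exp (-(β * z.2))) := h
        _ = φ * b 0 0 z := by simp [hbdef]
    have step2 : (∫⁻ z in Q0, ENNReal.ofReal (φ * b 0 0 z))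
        = ENNReal.ofReal (∫ z in Q0, φ * b 0 0 z) := by
      refine (ofReal_integral_eq_lintegral_ofReal ((hbint 0 0).const_mul φ)
        (ae_of_all _ fun z => ?_)).symm
      have : 0 ≤ b 0 0 z := by
        simp only [hbdef]
        positivity
      positivity
    have step3 : (∫ z in Q0, φ * b 0 0 z) = φ * (1 / α * (1 / β)) := by
      rw [integral_const_mul, hbval 0 0]
      norm_num [Nat.factorial]
    calc (∫⁻ z in Q0, ENNReal.ofReal (phiRho ρ (p + z.1) (q + z.2)))
        ≤ ∫⁻ z in Q0, ENNReal.ofReal (φ * b 0 0 z) := step1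
      _ = ENNReal.ofReal (φ * (1 / α * (1 / β))) := by rw [step2, step3]
  have hubR : ν.toReal ≤ φ * (1 / α * (1 / β)) :=
    ENNReal.toReal_le_of_le_ofReal (by positivity) hub
  -- lower bound
  set g : ℝ × ℝ → ℝ := fun z =>
    φ * ((Real.exp (-(α * z.1)) * Real.exp (-(β * z.2))) * (1 - K * (z.1 + z.2) ^ 2))
    with hgdef
  have hcomb : ∀ z : ℝ × ℝ, g z
      = φ * b 0 0 z - φ * K * b 2 0 z - φ * (2 * K) * b 1 1 z - φ * K * b 0 2 z := by
    intro z
    simp only [hgdef, hbdef]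
    ring
  have hgint : IntegrableOn g Q0 := by
    refine (Integrable.congr ?_ (ae_of_all _ fun z => (hcomb z).symm))
    exact ((((hbint 0 0).const_mul φ).sub ((hbint 2 0).const_mul (φ * K))).sub
      ((hbint 1 1).const_mul (φ * (2 * K)))).sub ((hbint 0 2).const_mul (φ * K))
  have i1 : IntegrableOn (fun z : ℝ × ℝ => φ * b 0 0 z) Q0 := (hbint 0 0).const_mul φ
  have i2 : IntegrableOn (fun z : ℝ × ℝ => φ * K * b 2 0 z) Q0 := (hbint 2 0).const_mul (φ * K)
  have i3 : IntegrableOn (fun z : ℝ × ℝ => φ * (2 * K) * b 1 1 z) Q0 :=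
    (hbint 1 1).const_mul (φ * (2 * K))
  have i4 : IntegrableOn (fun z : ℝ × ℝ => φ * K * b 0 2 z) Q0 := (hbint 0 2).const_mul (φ * K)
  have i12 : IntegrableOn (fun z : ℝ × ℝ => φ * b 0 0 z - φ * K * b 2 0 z) Q0 := i1.sub i2
  have i123 : IntegrableOn
      (fun z : ℝ × ℝ => φ * b 0 0 z - φ * K * b 2 0 z - φ * (2 * K) * b 1 1 z) Q0 := i12.sub i3
  have hgval : ∫ z in Q0, g z
      = φ * (1 / α * (1 / β)) - φ * K * (2 / α ^ 3 * (1 / β))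
        - φ * (2 * K) * (1 / α ^ 2 * (1 / β ^ 2)) - φ * K * (1 / α * (2 / β ^ 3)) := by
    rw [integral_congr_ae (ae_of_all _ hcomb)]
    rw [integral_sub i123 i4, integral_sub i12 i3, integral_sub i1 i2,
      integral_const_mul, integral_const_mul, integral_const_mul, integral_const_mul,
      hbval 0 0, hbval 2 0, hbval 1 1, hbval 0 2]
    norm_num [Nat.factorial]
  have hlb : ENNReal.ofReal (∫ z in Q0, g z) ≤ ν := by
    rw [hν]
    calc ENNReal.ofReal (∫ z in Q0, g z)
        ≤ ∫⁻ z in Q0, ENNReal.ofReal (g z) := ofReal_integral_le_lintegral_ofReal' hgint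
      _ ≤ ∫⁻ z in Q0, ENNReal.ofReal (phiRho ρ (p + z.1) (q + z.2)) := by
          refine setLIntegral_mono' hQ0m fun z hz => ENNReal.ofReal_le_ofReal ?_
          obtain ⟨hz1, hz2⟩ := hz
          have h := phiRho_lower hσ p q (le_of_lt (mem_Ioi.mp hz1)) (le_of_lt (mem_Ioi.mp hz2))
          rw [← hα, ← hβ] at h
          exact h
  have hlbR : φ * (1 / α * (1 / β)) - φ * K * (2 / α ^ 3 * (1 / β))
      - φ * (2 * K) * (1 / α ^ 2 * (1 / β ^ 2)) - φ * K * (1 / α * (2 / β ^ 3))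
      ≤ ν.toReal := by
    rw [← hgval]
    calc (∫ z in Q0, g z) ≤ (ENNReal.ofReal (∫ z in Q0, g z)).toReal := by
          rcases le_or_gt 0 (∫ z in Q0, g z) with h | h
          · rw [ENNReal.toReal_ofReal h]
          · calc (∫ z in Q0, g z) ≤ 0 := h.le
              _ ≤ _ := ENNReal.toReal_nonneg
      _ ≤ ν.toReal := ENNReal.toReal_mono hfin hlb
  exact ⟨hlbR, hubR⟩
lemma prob_as_lintegral {Ω : Type*} [MeasurableSpace Ω] (P : Measure Ω)
    [IsProbabilityMeasure P] {ρ : ℝ} (hσ : 0 < 1 - ρ ^ 2) (X₁ X₂ : Ω → ℝ)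
    (hmap : P.map (fun ω => (X₁ ω, X₂ ω)) =
      volume.withDensity fun p : ℝ × ℝ => ENNReal.ofReal (phiRho ρ p.1 p.2))
    (p q : ℝ) :
    P {ω | X₁ ω > p ∧ X₂ ω > q}
      = ∫⁻ z in Ioi (0:ℝ) ×ˢ Ioi (0:ℝ), ENNReal.ofReal (phiRho ρ (p + z.1) (q + z.2)) := by
  have hcont : Continuous fun z : ℝ × ℝ => phiRho ρ z.1 z.2 := by
    unfold phiRho
    apply continuous_const.mul
    apply Real.continuous_exp.comp
    apply Continuous.div_const
    fun_prop
  have hmeasfn : Measurable fun z : ℝ × ℝ => ENNReal.ofReal (phiRho ρ z.1 z.2) :=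
    ENNReal.measurable_ofReal.comp hcont.measurable
  have hWD : (volume.withDensity fun z : ℝ × ℝ => ENNReal.ofReal (phiRho ρ z.1 z.2)) ≠ 0 := by
    intro h0
    have h1 : (volume.withDensity fun z : ℝ × ℝ => ENNReal.ofReal (phiRho ρ z.1 z.2))
        Set.univ = 0 := by rw [h0]; rfl
    rw [withDensity_apply _ MeasurableSet.univ, Measure.restrict_univ] at h1
    have h2 : 0 < ∫⁻ z : ℝ × ℝ, ENNReal.ofReal (phiRho ρ z.1 z.2) := by
      rw [lintegral_pos_iff_support hmeasfn]
      have hsupp : (Function.support fun z : ℝ × ℝ => ENNReal.ofReal (phiRho ρ z.1 z.2))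
          = Set.univ := by
        ext z
        simp only [Function.mem_support, Set.mem_univ, iff_true]
        exact (ENNReal.ofReal_pos.mpr (phiRho_pos hσ z.1 z.2)).ne'
      rw [hsupp]
      have huniv : (volume : Measure (ℝ × ℝ)) Set.univ = ⊤ := by
        rw [← Set.univ_prod_univ, Measure.volume_eq_prod, Measure.prod_prod]
        simp [Real.volume_univ]
      rw [huniv]
      exact ENNReal.zero_lt_top
    exact absurd h1 h2.ne'
  have hAE : AEMeasurable (fun ω => (X₁ ω, X₂ ω)) P := by
    by_contra hc
    rw [Measure.map_of_not_aemeasurable hc] at hmap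
    exact hWD hmap.symm
  have hS : MeasurableSet (Ioi p ×ˢ Ioi q) := measurableSet_Ioi.prod measurableSet_Ioi
  have hset : {ω | X₁ ω > p ∧ X₂ ω > q} = (fun ω => (X₁ ω, X₂ ω)) ⁻¹' (Ioi p ×ˢ Ioi q) := by
    ext ω
    simp [Set.mem_prod]
  rw [hset, ← Measure.map_apply_of_aemeasurable hAE hS, hmap, withDensity_apply _ hS]
  -- translation
  have hmp : MeasurePreserving (fun z : ℝ × ℝ => (p, q) + z) volume volume :=
    measurePreserving_add_left volume (p, q)
  have hemb : MeasurableEmbedding (fun z : ℝ × ℝ => (p, q) + z) :=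
    (MeasurableEquiv.addLeft ((p, q) : ℝ × ℝ)).measurableEmbedding
  have hpre : (fun z : ℝ × ℝ => (p, q) + z) ⁻¹' (Ioi p ×ˢ Ioi q) = Ioi 0 ×ˢ Ioi 0 := by
    ext z
    simp only [Set.mem_preimage, Set.mem_prod, mem_Ioi, Prod.fst_add, Prod.snd_add]
    constructor
    · rintro ⟨h1, h2⟩
      constructor <;> linarith
    · rintro ⟨h1, h2⟩
      constructor <;> linarith
  have hkey := hmp.setLIntegral_comp_preimage_emb hemb
    (fun z : ℝ × ℝ => ENNReal.ofReal (phiRho ρ z.1 z.2)) (Ioi p ×ˢ Ioi q)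
  rw [hpre] at hkey
  rw [← hkey]
  refine lintegral_congr fun z => ?_
  simp
lemma ratio_id_up (φ A B u l1 l2 : ℝ) (hφ : φ ≠ 0) (hA : A ≠ 0) (hB : B ≠ 0)
    (hu : u ≠ 0) (hl1 : l1 ≠ 0) (hl2 : l2 ≠ 0) :
    (φ * (1 / A * (1 / B))) / (φ / (l1 * l2 * u ^ 2))
      = l1 * l2 * (u / A * (u / B)) := by
  field_simp

lemma ratio_id_low {ρ : ℝ} (φ A B u l1 l2 K : ℝ) (hρ2 : ρ < 1) (hσ : 0 < 1 - ρ ^ 2)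
    (hφ : φ ≠ 0) (hA : A ≠ 0) (hB : B ≠ 0)
    (hu : u ≠ 0) (hl1 : l1 ≠ 0) (hl2 : l2 ≠ 0) (hK : K = 1 / (2 * (1 - ρ ^ 2))) :
    (φ * (1 / A * (1 / B))
        - φ * (1 / (2 * (1 - ρ ^ 2))) * (2 / A ^ 3 * (1 / B))
        - φ * (2 * (1 / (2 * (1 - ρ ^ 2)))) * (1 / A ^ 2 * (1 / B ^ 2))
        - φ * (1 / (2 * (1 - ρ ^ 2))) * (1 / A * (2 / B ^ 3)))
        / (φ / (l1 * l2 * u ^ 2))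
      = l1 * l2 * (u / A * (u / B))
        - 2 * K * l1 * l2 *
          ((u / A) ^ 3 * (u / B) * (u⁻¹) ^ 2
            + (u / A) ^ 2 * (u / B) ^ 2 * (u⁻¹) ^ 2
            + u / A * (u / B) ^ 3 * (u⁻¹) ^ 2) := by
  rw [hK]
  have hσ' : (1 - ρ ^ 2) ≠ 0 := hσ.ne'
  field_simp
  ring


end GaussianTailAux

/-- Lemma (Appendix, i): tail asymptotics of a bivariate Gaussian vector,
case `a ∈ (ρ, 1]`. -/
theorem gaussian_vector_tail_a_gt_rho
    {Ω : Type*} [MeasurableSpace Ω] (P : Measure Ω) [IsProbabilityMeasure P]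
    (ρ : ℝ) (hρ : ρ ∈ Set.Ioo (-1 : ℝ) 1)
    (X₁ X₂ : Ω → ℝ)
    (hmap : P.map (fun ω => (X₁ ω, X₂ ω)) =
      volume.withDensity fun p : ℝ × ℝ => ENNReal.ofReal (phiRho ρ p.1 p.2))
    (c₁ c₂ a : ℝ) (ha : a ∈ Set.Ioc ρ 1)
    (lam₁ lam₂ : ℝ)
    (hlam₁ : lam₁ = (1 - a * ρ) / (1 - ρ ^ 2))
    (hlam₂ : lam₂ = (a - ρ) / (1 - ρ ^ 2)) :
    Tendsto (fun u => (P {ω | X₁ ω > u + c₁ ∧ X₂ ω > a * u + c₂}).toReal /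
        (phiRho ρ (u + c₁) (a * u + c₂) / (lam₁ * lam₂ * u ^ 2)))
      atTop (nhds 1) := by
  obtain ⟨hρ1, hρ2⟩ := hρ
  obtain ⟨ha1, ha2⟩ := ha
  have hσ : 0 < 1 - ρ ^ 2 := by nlinarith
  have hl1 : 0 < lam₁ := by
    rw [hlam₁]
    apply div_pos _ hσ
    rcases le_or_gt ρ 0 with h | h
    · nlinarith [mul_nonneg (sub_nonneg.mpr ha1.le) (neg_nonneg.mpr h),
        mul_pos (by linarith : (0:ℝ) < 1 - ρ) (by linarith : (0:ℝ) < 1 + ρ)]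
    · nlinarith [mul_nonneg (sub_nonneg.mpr ha2) h.le]
  have hl2 : 0 < lam₂ := by
    rw [hlam₂]
    exact div_pos (by linarith) hσ
  set d₁ : ℝ := (c₁ - ρ * c₂) / (1 - ρ ^ 2) with hd₁
  set d₂ : ℝ := (c₂ - ρ * c₁) / (1 - ρ ^ 2) with hd₂
  have hαrep : ∀ u : ℝ, (u + c₁ - ρ * (a * u + c₂)) / (1 - ρ ^ 2) = lam₁ * u + d₁ := by
    intro u
    rw [hlam₁, hd₁]
    field_simp
    ring
  have hβrep : ∀ u : ℝ, (a * u + c₂ - ρ * (u + c₁)) / (1 - ρ ^ 2) = lam₂ * u + d₂ := by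
    intro u
    rw [hlam₂, hd₂]
    field_simp
    ring
  have hprob : ∀ u : ℝ, P {ω | X₁ ω > u + c₁ ∧ X₂ ω > a * u + c₂}
      = ∫⁻ z in Ioi (0:ℝ) ×ˢ Ioi (0:ℝ),
          ENNReal.ofReal (phiRho ρ (u + c₁ + z.1) (a * u + c₂ + z.2)) :=
    fun u => prob_as_lintegral P hσ X₁ X₂ hmap (u + c₁) (a * u + c₂)
  -- limits of the elementary pieces
  have hαatTop : Tendsto (fun u : ℝ => lam₁ * u + d₁) atTop atTop :=
    tendsto_atTop_add_const_right atTop d₁ (tendsto_id.const_mul_atTop hl1)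
  have hβatTop : Tendsto (fun u : ℝ => lam₂ * u + d₂) atTop atTop :=
    tendsto_atTop_add_const_right atTop d₂ (tendsto_id.const_mul_atTop hl2)
  have hA : Tendsto (fun u : ℝ => u / (lam₁ * u + d₁)) atTop (nhds lam₁⁻¹) := by
    have h2 : Tendsto (fun u : ℝ => lam₁ + d₁ * u⁻¹) atTop (nhds (lam₁ + d₁ * 0)) :=
      tendsto_const_nhds.add (tendsto_const_nhds.mul tendsto_inv_atTop_zero)
    rw [mul_zero, add_zero] at h2
    have h1 : Tendsto (fun u : ℝ => (lam₁ * u + d₁) / u) atTop (nhds lam₁) := by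
      apply h2.congr'
      filter_upwards [eventually_ne_atTop (0:ℝ)] with u hu
      field_simp
    have h3 := h1.inv₀ hl1.ne'
    simpa [inv_div] using h3
  have hB : Tendsto (fun u : ℝ => u / (lam₂ * u + d₂)) atTop (nhds lam₂⁻¹) := by
    have h2 : Tendsto (fun u : ℝ => lam₂ + d₂ * u⁻¹) atTop (nhds (lam₂ + d₂ * 0)) :=
      tendsto_const_nhds.add (tendsto_const_nhds.mul tendsto_inv_atTop_zero)
    rw [mul_zero, add_zero] at h2
    have h1 : Tendsto (fun u : ℝ => (lam₂ * u + d₂) / u) atTop (nhds lam₂) := by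
      apply h2.congr'
      filter_upwards [eventually_ne_atTop (0:ℝ)] with u hu
      field_simp
    have h3 := h1.inv₀ hl2.ne'
    simpa [inv_div] using h3
  set K : ℝ := 1 / (2 * (1 - ρ ^ 2)) with hK
  -- upper ratio limit
  have hup : Tendsto (fun u : ℝ =>
      lam₁ * lam₂ * (u / (lam₁ * u + d₁) * (u / (lam₂ * u + d₂)))) atTop
      (nhds (lam₁ * lam₂ * (lam₁⁻¹ * lam₂⁻¹))) :=
    tendsto_const_nhds.mul (hA.mul hB)
  have hupval : lam₁ * lam₂ * (lam₁⁻¹ * lam₂⁻¹) = 1 := by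
    field_simp
  rw [hupval] at hup
  -- lower ratio limit
  have herr : Tendsto (fun u : ℝ =>
      2 * K * lam₁ * lam₂ *
        ((u / (lam₁ * u + d₁)) ^ 3 * (u / (lam₂ * u + d₂)) * (u⁻¹) ^ 2
          + (u / (lam₁ * u + d₁)) ^ 2 * (u / (lam₂ * u + d₂)) ^ 2 * (u⁻¹) ^ 2
          + u / (lam₁ * u + d₁) * (u / (lam₂ * u + d₂)) ^ 3 * (u⁻¹) ^ 2)) atTop
      (nhds (2 * K * lam₁ * lam₂ *
        ((lam₁⁻¹) ^ 3 * lam₂⁻¹ * (0:ℝ) ^ 2 + ((lam₁⁻¹) ^ 2 * (lam₂⁻¹) ^ 2 * (0:ℝ) ^ 2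
          + lam₁⁻¹ * (lam₂⁻¹) ^ 3 * (0:ℝ) ^ 2)))) := by
    apply tendsto_const_nhds.mul
    exact ((((hA.pow 3).mul hB).mul (tendsto_inv_atTop_zero.pow 2)).add
      ((((hA.pow 2).mul (hB.pow 2)).mul (tendsto_inv_atTop_zero.pow 2)).add
        (((hA.mul (hB.pow 3)).mul (tendsto_inv_atTop_zero.pow 2))))).congr (by
          intro u; ring)
  have herr0 : (2 * K * lam₁ * lam₂ *
      ((lam₁⁻¹) ^ 3 * lam₂⁻¹ * (0:ℝ) ^ 2 + ((lam₁⁻¹) ^ 2 * (lam₂⁻¹) ^ 2 * (0:ℝ) ^ 2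
        + lam₁⁻¹ * (lam₂⁻¹) ^ 3 * (0:ℝ) ^ 2))) = 0 := by norm_num
  rw [herr0] at herr
  have hlow := hup.sub herr
  rw [sub_zero] at hlow
  -- squeeze
  refine tendsto_of_tendsto_of_tendsto_of_le_of_le' hlow hup ?_ ?_
  · filter_upwards [eventually_gt_atTop (0:ℝ), hαatTop.eventually_gt_atTop 0,
      hβatTop.eventually_gt_atTop 0] with u hu hau hbu
    have hφ : 0 < phiRho ρ (u + c₁) (a * u + c₂) := phiRho_pos hσ _ _
    obtain ⟨hL, hU⟩ := key_bound hσ (u + c₁) (a * u + c₂) (lam₁ * u + d₁) (lam₂ * u + d₂)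
      (hαrep u).symm (hβrep u).symm hau hbu (hprob u) (measure_ne_top P _)
    have hgpos : 0 < phiRho ρ (u + c₁) (a * u + c₂) / (lam₁ * lam₂ * u ^ 2) := by
      apply div_pos hφ
      positivity
    have hid := ratio_id_low (phiRho ρ (u + c₁) (a * u + c₂)) (lam₁ * u + d₁)
      (lam₂ * u + d₂) u lam₁ lam₂ K hρ2 hσ hφ.ne' hau.ne' hbu.ne' hu.ne' hl1.ne' hl2.ne' hK
    rw [← hid]
    exact (div_le_div_iff_of_pos_right hgpos).mpr hL
  · filter_upwards [eventually_gt_atTop (0:ℝ), hαatTop.eventually_gt_atTop 0,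
      hβatTop.eventually_gt_atTop 0] with u hu hau hbu
    have hφ : 0 < phiRho ρ (u + c₁) (a * u + c₂) := phiRho_pos hσ _ _
    obtain ⟨hL, hU⟩ := key_bound hσ (u + c₁) (a * u + c₂) (lam₁ * u + d₁) (lam₂ * u + d₂)
      (hαrep u).symm (hβrep u).symm hau hbu (hprob u) (measure_ne_top P _)
    have hgpos : 0 < phiRho ρ (u + c₁) (a * u + c₂) / (lam₁ * lam₂ * u ^ 2) := by
      apply div_pos hφ
      positivity
    have hid := ratio_id_up (phiRho ρ (u + c₁) (a * u + c₂)) (lam₁ * u + d₁)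
      (lam₂ * u + d₂) u lam₁ lam₂ hφ.ne' hau.ne' hbu.ne' hu.ne' hl1.ne' hl2.ne'
    rw [← hid]
    exact (div_le_div_iff_of_pos_right hgpos).mpr hU
end
end

section
/- Let $(X_1, X_2)$ be a centered bivariate Gaussian vector with unit variances and correlation $\rho \in (-1,1)$, with joint density $\varphi_\rho$. Let $c_1, c_2$ be real constants and $a \le \rho$. Then as $u \to \infty$, $\mathbb{P}(X_1 > u + c_1, X_2 > au + c_2) \sim \sqrt{2\pi(1-\rho^2)} \, \Phi^*(c_1\rho - c_2) \, e^{\frac{(c_2 - \rho c_1)^2}{2(1-\rho^2)}} \, u^{-1} \varphi_\rho(u + c_1, \rho u + c_2)$, where $\Phi^*(c_1\rho - c_2) = 1$ when $a < \rho$, and when $a = \rho$, $\Phi^*$ is the distribution function of $\sqrt{1-\rho^2}\, X_1$ (i.e., a centered Gaussian with variance $1-\rho^2$). -/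
open MeasureTheory ProbabilityTheory Filter Set
open scoped ENNReal NNReal Topology

noncomputable section

lemma phiRho_factor {ρ : ℝ} (h1 : 0 < 1 - ρ ^ 2) (x y : ℝ) :
    phiRho ρ x y = gaussianPDFReal 0 1 x * gaussianPDFReal (ρ * x) (1 - ρ ^ 2).toNNReal y := by
  have hc : ((1 - ρ ^ 2).toNNReal : ℝ) = 1 - ρ ^ 2 := Real.coe_toNNReal _ h1.le
  unfold phiRho gaussianPDFReal
  rw [hc]
  push_cast
  rw [mul_mul_mul_comm, ← Real.exp_add]
  congr 1
  · have h2 : Real.sqrt 2 * Real.sqrt Real.pi * (Real.sqrt 2 * Real.sqrt Real.pi)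
        = 2 * Real.pi := by
      rw [← Real.sqrt_mul (by norm_num : (0:ℝ) ≤ 2)]
      exact Real.mul_self_sqrt (by positivity)
    have h4 : Real.sqrt (1-ρ^2) ≠ 0 := by positivity
    rw [mul_one, Real.sqrt_mul (by positivity : (0:ℝ) ≤ 2 * Real.pi)]
    field_simp
    linear_combination Real.sq_sqrt (by positivity : (0:ℝ) ≤ 2 * Real.pi)
  · have h0 : (1 - ρ ^ 2) ≠ 0 := ne_of_gt h1
    field_simp
    ring

lemma gaussTail_eq_integral {v : ℝ≥0} (hv : v ≠ 0) (t : ℝ) :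
    (gaussianReal 0 v (Ioi t)).toReal = ∫ y, (Ioi t).indicator (gaussianPDFReal 0 v) y := by
  rw [gaussianReal_apply_eq_integral 0 hv,
    ENNReal.toReal_ofReal (setIntegral_nonneg measurableSet_Ioi
      (fun y _ => gaussianPDFReal_nonneg 0 v y)),
    integral_indicator measurableSet_Ioi]

lemma tendsto_gaussTail_nhds {v : ℝ≥0} (hv : v ≠ 0) {t : ℝ → ℝ} {T : ℝ}
    (ht : Tendsto t atTop (𝓝 T)) :
    Tendsto (fun u => (gaussianReal 0 v (Ioi (t u))).toReal) atTop
      (𝓝 ((gaussianReal 0 v (Ioi T)).toReal)) := by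
  simp_rw [gaussTail_eq_integral hv]
  refine tendsto_integral_filter_of_dominated_convergence (gaussianPDFReal 0 v)
    (Eventually.of_forall fun u =>
      ((measurable_gaussianPDFReal 0 v).indicator measurableSet_Ioi).aestronglyMeasurable)
    (Eventually.of_forall fun u => ae_of_all _ fun y => ?_)
    (integrable_gaussianPDFReal 0 v) ?_
  · rw [Real.norm_of_nonneg (Set.indicator_nonneg
      (fun z _ => gaussianPDFReal_nonneg 0 v z) y)]
    exact Set.indicator_le_self' (fun z _ => gaussianPDFReal_nonneg 0 v z) y
  · have hae : ∀ᵐ (y : ℝ), y ≠ T := by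
      refine ae_iff.mpr ?_
      simp
    filter_upwards [hae] with y hy
    rcases lt_or_gt_of_ne hy with hlt | hgt
    · have hev : ∀ᶠ u in atTop, y < t u := ht.eventually_const_lt hlt
      rw [Set.indicator_of_notMem (by simpa using hlt.not_gt : y ∉ Ioi T)]
      refine tendsto_const_nhds.congr' (hev.mono fun u hu => ?_)
      exact (Set.indicator_of_notMem (by simpa using hu.not_gt) _).symm
    · have hev : ∀ᶠ u in atTop, t u < y := ht.eventually_lt_const hgt
      rw [Set.indicator_of_mem (by simpa using hgt)]
      refine tendsto_const_nhds.congr' (hev.mono fun u hu => ?_)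
      exact (Set.indicator_of_mem (mem_Ioi.mpr hu) _).symm

lemma tendsto_gaussTail_atBot {v : ℝ≥0} (hv : v ≠ 0) {t : ℝ → ℝ}
    (ht : Tendsto t atTop atBot) :
    Tendsto (fun u => (gaussianReal 0 v (Ioi (t u))).toReal) atTop (𝓝 1) := by
  simp_rw [gaussTail_eq_integral hv]
  rw [show (1 : ℝ) = ∫ y, gaussianPDFReal 0 v y from (integral_gaussianPDFReal_eq_one 0 hv).symm]
  refine tendsto_integral_filter_of_dominated_convergence (gaussianPDFReal 0 v)
    (Eventually.of_forall fun u =>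
      ((measurable_gaussianPDFReal 0 v).indicator measurableSet_Ioi).aestronglyMeasurable)
    (Eventually.of_forall fun u => ae_of_all _ fun y => ?_)
    (integrable_gaussianPDFReal 0 v) (ae_of_all _ fun y => ?_)
  · rw [Real.norm_of_nonneg (Set.indicator_nonneg
      (fun z _ => gaussianPDFReal_nonneg 0 v z) y)]
    exact Set.indicator_le_self' (fun z _ => gaussianPDFReal_nonneg 0 v z) y
  · have hev : ∀ᶠ u in atTop, t u < y := ht.eventually_lt_atBot y
    refine tendsto_const_nhds.congr' (hev.mono fun u hu => ?_)
    exact (Set.indicator_of_mem (mem_Ioi.mpr hu) _).symm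

lemma gaussTail_symm {v : ℝ≥0} (hv : v ≠ 0) (r : ℝ) :
    gaussianReal 0 v (Ioi r) = gaussianReal 0 v (Iic (-r)) := by
  have hmap := gaussianReal_map_const_mul (μ := 0) (v := v) (-1)
  have hv1 : (NNReal.mk ((-1:ℝ)^2) (sq_nonneg _)) = 1 := by
    ext
    norm_num
  rw [hv1, one_mul, mul_zero] at hmap
  have hpre : (fun y : ℝ => -1 * y) ⁻¹' (Ioi r) = Iio (-r) := by
    ext y
    simp only [mem_preimage, mem_Ioi, mem_Iio]
    constructor <;> intro h <;> linarith
  have : gaussianReal 0 v (Ioi r) = gaussianReal 0 v (Iio (-r)) := by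
    conv_lhs => rw [← hmap]
    rw [Measure.map_apply (measurable_const_mul _) measurableSet_Ioi, hpre]
  rw [this]
  refine measure_congr ?_
  rw [MeasureTheory.ae_eq_set]
  constructor
  · rw [Set.diff_eq_empty.mpr Set.Iio_subset_Iic_self]
    simp
  · have hd : Iic (-r) \ Iio (-r) = {-r} := by
      ext y
      simp only [Set.mem_diff, Set.mem_Iic, Set.mem_Iio, not_lt, Set.mem_singleton_iff]
      constructor
      · rintro ⟨hy1, hy2⟩; exact le_antisymm hy1 hy2
      · rintro rfl; exact ⟨le_refl _, le_refl _⟩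
    rw [hd]
    exact (gaussianReal_absolutelyContinuous 0 hv) (measure_singleton _)

lemma gaussIic_pos {v : ℝ≥0} (hv : v ≠ 0) (r : ℝ) :
    0 < (gaussianReal 0 v (Iic r)).toReal := by
  rw [gaussianReal_apply_eq_integral 0 hv,
    ENNReal.toReal_ofReal (setIntegral_nonneg measurableSet_Iic
      (fun y _ => gaussianPDFReal_nonneg 0 v y))]
  rw [setIntegral_pos_iff_support_of_nonneg_ae
    (ae_of_all _ (fun y => gaussianPDFReal_nonneg 0 v y))
    (integrable_gaussianPDFReal 0 v).integrableOn]
  have hsupp : Function.support (gaussianPDFReal 0 v) = Set.univ := by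
    ext y
    simp [Function.mem_support, (gaussianPDFReal_pos 0 v y hv).ne']
  rw [hsupp, Set.univ_inter]
  simp [Real.volume_Iic]

lemma toNNReal_ne_zero_of_pos {r : ℝ} (h : 0 < r) : r.toNNReal ≠ 0 := by
  simp [Real.toNNReal_eq_zero, not_le, h]

lemma phiRho_meas (ρ : ℝ) : Measurable (fun p : ℝ × ℝ => ENNReal.ofReal (phiRho ρ p.1 p.2)) := by
  apply Measurable.ennreal_ofReal
  unfold phiRho
  fun_prop

lemma phiRho_factor' {ρ : ℝ} (h1 : 0 < 1 - ρ ^ 2) (x y : ℝ) :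
    ENNReal.ofReal (phiRho ρ x y)
      = ENNReal.ofReal (gaussianPDFReal 0 1 x) * gaussianPDF (ρ * x) (1 - ρ ^ 2).toNNReal y := by
  rw [phiRho_factor h1, ENNReal.ofReal_mul (gaussianPDFReal_nonneg 0 1 x), gaussianPDF]

lemma inner_lint {ρ : ℝ} (h1 : 0 < 1 - ρ ^ 2) (x b₂ : ℝ) :
    ∫⁻ y in Ioi b₂, ENNReal.ofReal (phiRho ρ x y)
      = ENNReal.ofReal (gaussianPDFReal 0 1 x) *
          gaussianReal 0 (1 - ρ ^ 2).toNNReal (Ioi (b₂ - ρ * x)) := by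
  simp_rw [phiRho_factor' h1 x]
  rw [lintegral_const_mul _ (measurable_gaussianPDF _ _),
    ← gaussianReal_apply (ρ * x) (toNNReal_ne_zero_of_pos h1)]
  congr 1
  have hm := gaussianReal_map_add_const (μ := 0) (v := (1 - ρ ^ 2).toNNReal) (ρ * x)
  rw [zero_add] at hm
  rw [← hm, Measure.map_apply (measurable_add_const _) measurableSet_Ioi]
  congr 1
  ext y
  simp only [mem_preimage, mem_Ioi]
  constructor <;> intro h <;> linarith

lemma prod_lint {ρ : ℝ} (h1 : 0 < 1 - ρ ^ 2) (b₁ b₂ : ℝ) :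
    (volume.withDensity fun p : ℝ × ℝ => ENNReal.ofReal (phiRho ρ p.1 p.2))
        (Ioi b₁ ×ˢ Ioi b₂)
      = ∫⁻ x in Ioi b₁, ENNReal.ofReal (gaussianPDFReal 0 1 x) *
          gaussianReal 0 (1 - ρ ^ 2).toNNReal (Ioi (b₂ - ρ * x)) := by
  rw [withDensity_apply _ (measurableSet_Ioi.prod measurableSet_Ioi),
    Measure.volume_eq_prod, ← Measure.prod_restrict,
    lintegral_prod _ (phiRho_meas ρ).aemeasurable]
  exact lintegral_congr fun x => inner_lint h1 x b₂

lemma mass_one {ρ : ℝ} (h1 : 0 < 1 - ρ ^ 2) :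
    (volume.withDensity fun p : ℝ × ℝ => ENNReal.ofReal (phiRho ρ p.1 p.2)) Set.univ = 1 := by
  rw [withDensity_apply _ MeasurableSet.univ, Measure.restrict_univ,
    Measure.volume_eq_prod, lintegral_prod _ (phiRho_meas ρ).aemeasurable]
  have hinner : ∀ x : ℝ, ∫⁻ y, ENNReal.ofReal (phiRho ρ x y)
      = ENNReal.ofReal (gaussianPDFReal 0 1 x) := by
    intro x
    simp_rw [phiRho_factor' h1 x]
    rw [lintegral_const_mul _ (measurable_gaussianPDF _ _),
      lintegral_gaussianPDF_eq_one _ (toNNReal_ne_zero_of_pos h1), mul_one]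
  rw [lintegral_congr hinner]
  exact lintegral_gaussianPDFReal_eq_one 0 one_ne_zero

lemma G_antitone {ρ : ℝ} :
    Antitone (fun t : ℝ => (gaussianReal 0 (1 - ρ ^ 2).toNNReal (Ioi t)).toReal) :=
  fun s t hst => ENNReal.toReal_mono (measure_ne_top _ _)
    (measure_mono (Ioi_subset_Ioi hst))

lemma toReal_eq {ρ : ℝ} (h1 : 0 < 1 - ρ ^ 2) (b₁ b₂ : ℝ) :
    ((volume.withDensity fun p : ℝ × ℝ => ENNReal.ofReal (phiRho ρ p.1 p.2))
        (Ioi b₁ ×ˢ Ioi b₂)).toReal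
      = ∫ x in Ioi b₁, gaussianPDFReal 0 1 x *
          (gaussianReal 0 (1 - ρ ^ 2).toNNReal (Ioi (b₂ - ρ * x))).toReal := by
  have hof : ∀ x : ℝ, ENNReal.ofReal (gaussianPDFReal 0 1 x *
        (gaussianReal 0 (1 - ρ ^ 2).toNNReal (Ioi (b₂ - ρ * x))).toReal)
      = ENNReal.ofReal (gaussianPDFReal 0 1 x) *
        gaussianReal 0 (1 - ρ ^ 2).toNNReal (Ioi (b₂ - ρ * x)) := by
    intro x
    rw [ENNReal.ofReal_mul (gaussianPDFReal_nonneg 0 1 x),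
      ENNReal.ofReal_toReal (measure_ne_top _ _)]
  have hmeas : Measurable (fun x => gaussianPDFReal 0 1 x *
      (gaussianReal 0 (1 - ρ ^ 2).toNNReal (Ioi (b₂ - ρ * x))).toReal) :=
    (measurable_gaussianPDFReal 0 1).mul
      (G_antitone.measurable.comp (by fun_prop : Measurable fun x : ℝ => b₂ - ρ * x))
  have hl := lintegral_congr (μ := volume.restrict (Ioi b₁)) (fun x => (hof x).symm)
  rw [prod_lint h1 b₁ b₂, hl]
  exact (integral_eq_lintegral_of_nonneg_ae
    (ae_of_all _ fun x => mul_nonneg (gaussianPDFReal_nonneg 0 1 x) ENNReal.toReal_nonneg)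
    hmeas.aestronglyMeasurable).symm

lemma shift_integral (g : ℝ → ℝ) (d : ℝ) :
    ∫ x in Ioi d, g x = ∫ t in Ioi (0:ℝ), g (t + d) := by
  have h := (measurePreserving_add_right (volume : Measure ℝ) d).setIntegral_preimage_emb
    (measurableEmbedding_addRight d) g (Ioi d)
  have hpre : (fun t : ℝ => t + d) ⁻¹' Ioi d = Ioi 0 := by
    ext t
    simp only [mem_preimage, mem_Ioi]
    constructor <;> intro h <;> linarith
  rw [hpre] at h
  exact h.symm

lemma subst_formula {ρ : ℝ} (c₁ c₂ a : ℝ) {u : ℝ} (hu : 0 < u) :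
    u * ∫ x in Ioi (u + c₁), gaussianPDFReal 0 1 x *
        (gaussianReal 0 (1 - ρ ^ 2).toNNReal (Ioi (a * u + c₂ - ρ * x))).toReal
      = gaussianPDFReal 0 1 (u + c₁) *
          ∫ s in Ioi (0:ℝ), Real.exp (-(s + c₁ * s / u + s ^ 2 / (2 * u ^ 2))) *
            (gaussianReal 0 (1 - ρ ^ 2).toNNReal
              (Ioi ((a - ρ) * u + c₂ - ρ * c₁ - ρ * (s / u)))).toReal := by
  set G : ℝ → ℝ := fun t => (gaussianReal 0 (1 - ρ ^ 2).toNNReal (Ioi t)).toReal with hG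
  rw [shift_integral _ (u + c₁)]
  have hscale := integral_comp_mul_left_Ioi
    (fun t => gaussianPDFReal 0 1 (t + (u + c₁)) * G (a * u + c₂ - ρ * (t + (u + c₁))))
    0 (inv_pos.mpr hu)
  rw [mul_zero, inv_inv, smul_eq_mul] at hscale
  rw [← hscale]
  rw [← integral_const_mul]
  refine integral_congr_ae (ae_of_all _ fun s => ?_)
  have hune : u ≠ 0 := ne_of_gt hu
  have harg : a * u + c₂ - ρ * (u⁻¹ * s + (u + c₁))
      = (a - ρ) * u + c₂ - ρ * c₁ - ρ * (s / u) := by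
    field_simp
    ring
  have hpdf : gaussianPDFReal 0 1 (u⁻¹ * s + (u + c₁))
      = gaussianPDFReal 0 1 (u + c₁)
        * Real.exp (-(s + c₁ * s / u + s ^ 2 / (2 * u ^ 2))) := by
    unfold gaussianPDFReal
    conv_rhs => rw [mul_assoc, ← Real.exp_add]
    congr 1
    push_cast
    field_simp
    ring
  simp only
  rw [harg, hpdf]
  ring

lemma tendsto_tailI {ρ : ℝ} (h1 : 0 < 1 - ρ ^ 2) (c₁ c₂ a : ℝ) (ha : a ≤ ρ) (Φs : ℝ)
    (hΦs : Φs = if a < ρ then (1 : ℝ)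
      else (gaussianReal 0 (1 - ρ ^ 2).toNNReal (Set.Iic (c₁ * ρ - c₂))).toReal) :
    Tendsto (fun u => ∫ s in Ioi (0:ℝ),
        Real.exp (-(s + c₁ * s / u + s ^ 2 / (2 * u ^ 2))) *
          (gaussianReal 0 (1 - ρ ^ 2).toNNReal
            (Ioi ((a - ρ) * u + c₂ - ρ * c₁ - ρ * (s / u)))).toReal)
      atTop (𝓝 Φs) := by
  have hv := toNNReal_ne_zero_of_pos h1
  have hΦs_int : Φs = ∫ s in Ioi (0:ℝ), Real.exp (-s) * Φs := by
    rw [integral_mul_const, integral_exp_neg_Ioi_zero, one_mul]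
  rw [hΦs_int]
  refine tendsto_integral_filter_of_dominated_convergence
    (fun s => Real.exp (-((1:ℝ)/2) * s)) ?_ ?_ ?_ ?_
  · refine Eventually.of_forall fun u => ?_
    refine (Measurable.mul ?_ ?_).aestronglyMeasurable
    · fun_prop
    · exact G_antitone.measurable.comp
        (by fun_prop : Measurable fun s : ℝ => (a - ρ) * u + c₂ - ρ * c₁ - ρ * (s / u))
  · filter_upwards [eventually_ge_atTop (max 1 (2 * |c₁|))] with u hu
    have hu0 : (0:ℝ) < u := lt_of_lt_of_le one_pos (le_trans (le_max_left _ _) hu)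
    have huc : 2 * |c₁| ≤ u := le_trans (le_max_right _ _) hu
    refine (ae_restrict_iff' measurableSet_Ioi).mpr (ae_of_all _ fun s hs => ?_)
    have hs0 : (0:ℝ) < s := hs
    have hGle : (gaussianReal 0 (1 - ρ ^ 2).toNNReal
        (Ioi ((a - ρ) * u + c₂ - ρ * c₁ - ρ * (s / u)))).toReal ≤ 1 := by
      refine ENNReal.toReal_le_of_le_ofReal one_pos.le ?_
      simpa using prob_le_one
    have hGnn : (0:ℝ) ≤ (gaussianReal 0 (1 - ρ ^ 2).toNNReal
        (Ioi ((a - ρ) * u + c₂ - ρ * c₁ - ρ * (s / u)))).toReal := ENNReal.toReal_nonneg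
    rw [Real.norm_of_nonneg (mul_nonneg (Real.exp_nonneg _) hGnn)]
    have habs : |c₁ * s / u| ≤ s / 2 := by
      rw [abs_div, abs_of_pos hu0, abs_mul, abs_of_pos hs0, div_le_iff₀ hu0]
      nlinarith [abs_nonneg c₁]
    have hexp : Real.exp (-(s + c₁ * s / u + s ^ 2 / (2 * u ^ 2)))
        ≤ Real.exp (-((1:ℝ)/2) * s) := by
      apply Real.exp_le_exp.mpr
      have h2 : -(s/2) ≤ c₁ * s / u := neg_le_of_abs_le habs
      have h3 : (0:ℝ) ≤ s ^ 2 / (2 * u ^ 2) := by positivity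
      nlinarith
    calc Real.exp (-(s + c₁ * s / u + s ^ 2 / (2 * u ^ 2))) *
          (gaussianReal 0 (1 - ρ ^ 2).toNNReal
            (Ioi ((a - ρ) * u + c₂ - ρ * c₁ - ρ * (s / u)))).toReal
        ≤ Real.exp (-(s + c₁ * s / u + s ^ 2 / (2 * u ^ 2))) * 1 := by
          exact mul_le_mul_of_nonneg_left hGle (Real.exp_nonneg _)
      _ ≤ Real.exp (-((1:ℝ)/2) * s) := by rw [mul_one]; exact hexp
  · simpa only [neg_mul, IntegrableOn] using exp_neg_integrableOn_Ioi 0 (by norm_num : (0:ℝ) < 1/2)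
  · refine (ae_restrict_iff' measurableSet_Ioi).mpr (ae_of_all _ fun s hs => ?_)
    have hexp : Tendsto (fun u : ℝ => Real.exp (-(s + c₁ * s / u + s ^ 2 / (2 * u ^ 2))))
        atTop (𝓝 (Real.exp (-s))) := by
      have t1 : Tendsto (fun u : ℝ => c₁ * s / u) atTop (𝓝 0) :=
        Tendsto.div_atTop tendsto_const_nhds tendsto_id
      have t2 : Tendsto (fun u : ℝ => s ^ 2 / (2 * u ^ 2)) atTop (𝓝 0) :=
        Tendsto.div_atTop tendsto_const_nhds
          ((tendsto_pow_atTop (two_ne_zero)).const_mul_atTop two_pos)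
      have tsum : Tendsto (fun u : ℝ => s + c₁ * s / u + s ^ 2 / (2 * u ^ 2))
          atTop (𝓝 s) := by
        have := (tendsto_const_nhds (x := s) (f := atTop)).add t1 |>.add t2
        simpa using this
      exact (Real.continuous_exp.tendsto _).comp tsum.neg
    have hG : Tendsto (fun u : ℝ => (gaussianReal 0 (1 - ρ ^ 2).toNNReal
        (Ioi ((a - ρ) * u + c₂ - ρ * c₁ - ρ * (s / u)))).toReal) atTop (𝓝 Φs) := by
      rcases lt_or_eq_of_le ha with hlt | heq
      · rw [hΦs, if_pos hlt]
        refine tendsto_gaussTail_atBot hv ?_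
        have hrest : Tendsto (fun u : ℝ => c₂ - ρ * c₁ - ρ * (s / u)) atTop
            (𝓝 (c₂ - ρ * c₁ - ρ * 0)) := by
          refine Tendsto.sub tendsto_const_nhds (Tendsto.const_mul ρ ?_)
          exact Tendsto.div_atTop tendsto_const_nhds tendsto_id
        have hmain : Tendsto (fun u : ℝ => (a - ρ) * u) atTop atBot :=
          Tendsto.const_mul_atTop_of_neg (by linarith) tendsto_id
        have := tendsto_atBot_add_right_of_ge' atTop (c₂ - ρ * c₁ - ρ * 0 + 1) hmain
          ((hrest.eventually_lt_const (lt_add_one _)).mono fun x hx => le_of_lt hx)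
        refine this.congr fun u => by ring
      · rw [hΦs, if_neg (by rw [heq]; exact lt_irrefl ρ)]
        have harg : Tendsto (fun u : ℝ => (a - ρ) * u + c₂ - ρ * c₁ - ρ * (s / u)) atTop
            (𝓝 (c₂ - ρ * c₁)) := by
          rw [heq]
          have hrest : Tendsto (fun u : ℝ => c₂ - ρ * c₁ - ρ * (s / u)) atTop
              (𝓝 (c₂ - ρ * c₁ - ρ * 0)) := by
            refine Tendsto.sub tendsto_const_nhds (Tendsto.const_mul ρ ?_)
            exact Tendsto.div_atTop tendsto_const_nhds tendsto_id
          rw [show c₂ - ρ * c₁ = c₂ - ρ * c₁ - ρ * 0 by ring]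
          refine hrest.congr fun u => by ring
        have := tendsto_gaussTail_nhds hv harg
        rwa [gaussTail_symm hv (c₂ - ρ * c₁),
          show -(c₂ - ρ * c₁) = c₁ * ρ - c₂ by ring] at this
    exact hexp.mul hG

lemma denom_eq {ρ : ℝ} (h1 : 0 < 1 - ρ ^ 2) (c₁ c₂ u : ℝ) :
    Real.sqrt (2 * Real.pi * (1 - ρ ^ 2)) *
        Real.exp ((c₂ - ρ * c₁) ^ 2 / (2 * (1 - ρ ^ 2))) *
        phiRho ρ (u + c₁) (ρ * u + c₂)
      = gaussianPDFReal 0 1 (u + c₁) := by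
  have hval : gaussianPDFReal (ρ * (u + c₁)) (1 - ρ ^ 2).toNNReal (ρ * u + c₂)
      = (Real.sqrt (2 * Real.pi * (1 - ρ ^ 2)))⁻¹ *
          Real.exp (-(c₂ - ρ * c₁) ^ 2 / (2 * (1 - ρ ^ 2))) := by
    unfold gaussianPDFReal
    rw [Real.coe_toNNReal _ h1.le]
    have harg : ρ * u + c₂ - ρ * (u + c₁) = c₂ - ρ * c₁ := by ring
    rw [harg]
  rw [phiRho_factor h1, hval]
  have hS : Real.sqrt (2 * Real.pi * (1 - ρ ^ 2)) ≠ 0 := by positivity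
  have hE : Real.exp ((c₂ - ρ * c₁) ^ 2 / (2 * (1 - ρ ^ 2))) *
      Real.exp (-(c₂ - ρ * c₁) ^ 2 / (2 * (1 - ρ ^ 2))) = 1 := by
    rw [← Real.exp_add,
      show (c₂ - ρ * c₁) ^ 2 / (2 * (1 - ρ ^ 2)) +
        -(c₂ - ρ * c₁) ^ 2 / (2 * (1 - ρ ^ 2)) = 0 by ring, Real.exp_zero]
  rw [show Real.sqrt (2 * Real.pi * (1 - ρ ^ 2)) *
      Real.exp ((c₂ - ρ * c₁) ^ 2 / (2 * (1 - ρ ^ 2))) *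
      (gaussianPDFReal 0 1 (u + c₁) *
        ((Real.sqrt (2 * Real.pi * (1 - ρ ^ 2)))⁻¹ *
          Real.exp (-(c₂ - ρ * c₁) ^ 2 / (2 * (1 - ρ ^ 2)))))
    = gaussianPDFReal 0 1 (u + c₁) *
      ((Real.sqrt (2 * Real.pi * (1 - ρ ^ 2)) * (Real.sqrt (2 * Real.pi * (1 - ρ ^ 2)))⁻¹) *
        (Real.exp ((c₂ - ρ * c₁) ^ 2 / (2 * (1 - ρ ^ 2))) *
          Real.exp (-(c₂ - ρ * c₁) ^ 2 / (2 * (1 - ρ ^ 2))))) from by ring,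
    mul_inv_cancel₀ hS, hE, one_mul, mul_one]

/-- Lemma (Appendix, ii): tail asymptotics of a bivariate Gaussian vector,
case `a ≤ ρ`. -/
theorem gaussian_vector_tail_a_le_rho
    {Ω : Type*} [MeasurableSpace Ω] (P : Measure Ω) [IsProbabilityMeasure P]
    (ρ : ℝ) (hρ : ρ ∈ Set.Ioo (-1 : ℝ) 1)
    (X₁ X₂ : Ω → ℝ)
    (hmap : P.map (fun ω => (X₁ ω, X₂ ω)) =
      volume.withDensity fun p : ℝ × ℝ => ENNReal.ofReal (phiRho ρ p.1 p.2))
    (c₁ c₂ a : ℝ) (ha : a ≤ ρ)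
    (Φs : ℝ)
    (hΦs : Φs = if a < ρ then (1 : ℝ)
      else (gaussianReal 0 (1 - ρ ^ 2).toNNReal (Set.Iic (c₁ * ρ - c₂))).toReal) :
    Tendsto (fun u => (P {ω | X₁ ω > u + c₁ ∧ X₂ ω > a * u + c₂}).toReal /
        (Real.sqrt (2 * Real.pi * (1 - ρ ^ 2)) * Φs *
          Real.exp ((c₂ - ρ * c₁) ^ 2 / (2 * (1 - ρ ^ 2))) *
          (phiRho ρ (u + c₁) (ρ * u + c₂) / u)))
      atTop (nhds 1) := by
  obtain ⟨hρ1, hρ2⟩ := hρ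
  have h1 : 0 < 1 - ρ ^ 2 := by nlinarith
  have hv := toNNReal_ne_zero_of_pos h1
  have hΦpos : 0 < Φs := by
    rw [hΦs]
    split_ifs with h
    · exact one_pos
    · exact gaussIic_pos hv _
  have hae : AEMeasurable (fun ω => (X₁ ω, X₂ ω)) P := by
    by_contra h
    rw [Measure.map_of_not_aemeasurable h] at hmap
    have h0 := mass_one (ρ := ρ) h1
    rw [← hmap] at h0
    simp at h0
  have hPeq : ∀ u : ℝ, (P {ω | X₁ ω > u + c₁ ∧ X₂ ω > a * u + c₂}).toReal
      = ∫ x in Ioi (u + c₁), gaussianPDFReal 0 1 x *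
          (gaussianReal 0 (1 - ρ ^ 2).toNNReal (Ioi (a * u + c₂ - ρ * x))).toReal := by
    intro u
    have hsets : {ω | X₁ ω > u + c₁ ∧ X₂ ω > a * u + c₂}
        = (fun ω => (X₁ ω, X₂ ω)) ⁻¹' (Ioi (u + c₁) ×ˢ Ioi (a * u + c₂)) := by
      ext ω
      simp [Set.mem_prod]
    rw [hsets, ← Measure.map_apply_of_aemeasurable hae
      (measurableSet_Ioi.prod measurableSet_Ioi), hmap, toReal_eq h1]
  have hI := tendsto_tailI h1 c₁ c₂ a ha Φs hΦs
  have hlim : Tendsto (fun u => (∫ s in Ioi (0:ℝ),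
      Real.exp (-(s + c₁ * s / u + s ^ 2 / (2 * u ^ 2))) *
        (gaussianReal 0 (1 - ρ ^ 2).toNNReal
          (Ioi ((a - ρ) * u + c₂ - ρ * c₁ - ρ * (s / u)))).toReal) / Φs)
      atTop (𝓝 1) := by
    have := hI.div_const Φs
    rwa [div_self (ne_of_gt hΦpos)] at this
  refine hlim.congr' ?_
  filter_upwards [eventually_gt_atTop (0:ℝ)] with u hu
  have hsub := subst_formula (ρ := ρ) c₁ c₂ a hu
  rw [← hPeq u] at hsub
  have hpdfpos : 0 < gaussianPDFReal 0 1 (u + c₁) :=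
    gaussianPDFReal_pos _ _ _ one_ne_zero
  set p := gaussianPDFReal 0 1 (u + c₁) with hp
  set Iu := ∫ s in Ioi (0:ℝ),
      Real.exp (-(s + c₁ * s / u + s ^ 2 / (2 * u ^ 2))) *
        (gaussianReal 0 (1 - ρ ^ 2).toNNReal
          (Ioi ((a - ρ) * u + c₂ - ρ * c₁ - ρ * (s / u)))).toReal with hIu
  have hP' : (P {ω | X₁ ω > u + c₁ ∧ X₂ ω > a * u + c₂}).toReal = p * Iu / u := by
    rw [eq_div_iff (ne_of_gt hu)]
    linarith [hsub]
  have hD : Real.sqrt (2 * Real.pi * (1 - ρ ^ 2)) * Φs *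
      Real.exp ((c₂ - ρ * c₁) ^ 2 / (2 * (1 - ρ ^ 2))) *
      (phiRho ρ (u + c₁) (ρ * u + c₂) / u) = Φs * (p / u) := by
    rw [hp, ← denom_eq h1 c₁ c₂ u]
    ring
  rw [hP', hD]
  field_simp
end
end
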